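/- Let U ⊆ ℝᵐ × ℝⁿ be open, f : U → ℝⁿ real analytic, and assume that for every (x,y) ∈ U the partial differential of f in the y-variables at (x,y) is an invertible linear map ℝⁿ → ℝⁿ. Suppose further that there is an open set V ⊆ ℝᵐ and a function φ : V → ℝⁿ such that {(x,y) ∈ U : f(x,y) = 0} = graph(φ). Then φ is real analytic on V. -/

import Mathlib

theorem stmt_16 (m n : ℕ) (U : Set ((Fin m → ℝ) × (Fin n → ℝ))) (hU : IsOpen U)
    (f : (Fin m → ℝ) × (Fin n → ℝ) → (Fin n → ℝ)) (hf : AnalyticOn ℝ f U)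
    (hinv : ∀ p ∈ U, ∃ e : (Fin n → ℝ) ≃L[ℝ] (Fin n → ℝ),
      ∀ v : Fin n → ℝ, e v = fderiv ℝ f p (0, v))
    (V : Set (Fin m → ℝ)) (hV : IsOpen V)
    (φ : (Fin m → ℝ) → (Fin n → ℝ))
    (hgraph : {p ∈ U | f p = 0} = (fun x => (x, φ x)) '' V) :
    AnalyticOn ℝ φ V := by
  rw [hV.analyticOn_iff_analyticOnNhd]
  intro x₀ hx₀
  have hsub : ∀ x ∈ V, (x, φ x) ∈ U ∧ f (x, φ x) = 0 := by
    intro x hx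
    have : ((x, φ x) : (Fin m → ℝ) × (Fin n → ℝ)) ∈ {p ∈ U | f p = 0} := by
      rw [hgraph]; exact ⟨x, hx, rfl⟩
    exact this
  set p₀ : (Fin m → ℝ) × (Fin n → ℝ) := (x₀, φ x₀) with hp₀
  obtain ⟨hp₀U, hfp₀⟩ := hsub x₀ hx₀
  have hfU : AnalyticOnNhd ℝ f U := (hU.analyticOn_iff_analyticOnNhd).mp hf
  set F : (Fin m → ℝ) × (Fin n → ℝ) → (Fin m → ℝ) × (Fin n → ℝ) :=
    fun p => (p.1, f p) with hFdef
  have hFa : AnalyticAt ℝ F p₀ := analyticAt_fst.prod (hfU p₀ hp₀U)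
  obtain ⟨e, he⟩ := hinv p₀ hp₀U
  have hdf : DifferentiableAt ℝ f p₀ := (hfU p₀ hp₀U).differentiableAt
  set J : ((Fin m → ℝ) × (Fin n → ℝ)) →L[ℝ] ((Fin m → ℝ) × (Fin n → ℝ)) :=
    (ContinuousLinearMap.fst ℝ (Fin m → ℝ) (Fin n → ℝ)).prod (fderiv ℝ f p₀) with hJ
  have hFd : HasFDerivAt F J p₀ := HasFDerivAt.prodMk hasFDerivAt_fst hdf.hasFDerivAt
  set A : (Fin m → ℝ) →L[ℝ] (Fin n → ℝ) :=
    (fderiv ℝ f p₀).comp (ContinuousLinearMap.inl ℝ _ _) with hA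
  set K : ((Fin m → ℝ) × (Fin n → ℝ)) →L[ℝ] ((Fin m → ℝ) × (Fin n → ℝ)) :=
    (ContinuousLinearMap.fst ℝ (Fin m → ℝ) (Fin n → ℝ)).prod
      ((e.symm : (Fin n → ℝ) →L[ℝ] (Fin n → ℝ)).comp
        ((ContinuousLinearMap.snd ℝ _ _) -
          A.comp (ContinuousLinearMap.fst ℝ _ _))) with hK
  have hsplit : ∀ u v, fderiv ℝ f p₀ (u, v) = A u + e v := by
    intro u v
    have h1 : ((u, v) : (Fin m → ℝ) × (Fin n → ℝ)) = (u, 0) + (0, v) := by simp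
    rw [h1, map_add, he]
    rfl
  have h₁ : Function.LeftInverse K J := by
    rintro ⟨u, v⟩
    simp [hJ, hK, hsplit u v]
  have h₂ : Function.RightInverse K J := by
    rintro ⟨u, w⟩
    simp [hJ, hK, hsplit]
  set E := ContinuousLinearEquiv.equivOfInverse J K h₁ h₂ with hE
  have hEJ : (E : ((Fin m → ℝ) × (Fin n → ℝ)) →L[ℝ] ((Fin m → ℝ) × (Fin n → ℝ))) = J := rfl
  have hFd' : HasFDerivAt F
      (E : ((Fin m → ℝ) × (Fin n → ℝ)) →L[ℝ] ((Fin m → ℝ) × (Fin n → ℝ))) p₀ := by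
    rw [hEJ]; exact hFd
  have hFs : HasStrictFDerivAt F
      (E : ((Fin m → ℝ) × (Fin n → ℝ)) →L[ℝ] ((Fin m → ℝ) × (Fin n → ℝ))) p₀ :=
    (hFa.contDiffAt (n := ⊤)).hasStrictFDerivAt' hFd' (by simp)
  set Φ := hFs.toOpenPartialHomeomorph F with hΦ
  have hΦcoe : (Φ : ((Fin m → ℝ) × (Fin n → ℝ)) → ((Fin m → ℝ) × (Fin n → ℝ))) = F :=
    hFs.toOpenPartialHomeomorph_coe
  have hp₀s : p₀ ∈ Φ.source := hFs.mem_toOpenPartialHomeomorph_source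
  have hΦa : AnalyticAt ℝ (Φ : ((Fin m → ℝ) × (Fin n → ℝ)) → _) p₀ := by rw [hΦcoe]; exact hFa
  have hfd : fderiv ℝ (Φ : ((Fin m → ℝ) × (Fin n → ℝ)) → _) p₀
      = (E : ((Fin m → ℝ) × (Fin n → ℝ)) →L[ℝ] _) := by
    rw [hΦcoe]; exact hFd'.fderiv
  have hsymm : AnalyticAt ℝ Φ.symm (Φ p₀) := Φ.analyticAt_symm' hp₀s hΦa hfd
  have hΦp₀ : Φ p₀ = (x₀, (0 : Fin n → ℝ)) := by
    rw [hΦcoe]; simp only [hFdef]; rw [hfp₀]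
  rw [hΦp₀] at hsymm
  have hW : IsOpen (Φ.source ∩ U) := Φ.open_source.inter hU
  have hT : IsOpen (Φ '' (Φ.source ∩ U)) :=
    Φ.isOpen_image_of_subset_source hW Set.inter_subset_left
  have hmemT : ((x₀, (0 : Fin n → ℝ)) : (Fin m → ℝ) × (Fin n → ℝ)) ∈ Φ '' (Φ.source ∩ U) :=
    ⟨p₀, ⟨hp₀s, hp₀U⟩, hΦp₀⟩
  have hcont : Continuous (fun x : Fin m → ℝ => ((x, (0 : Fin n → ℝ)) : _ × _)) := by
    fun_prop
  have hso : IsOpen {x : Fin m → ℝ | ((x, (0 : Fin n → ℝ)) : _ × _) ∈ Φ '' (Φ.source ∩ U)} :=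
    hT.preimage hcont
  have heq : ∀ᶠ x in nhds x₀, (Φ.symm (x, (0 : Fin n → ℝ))).2 = φ x := by
    filter_upwards [hso.mem_nhds hmemT, hV.mem_nhds hx₀] with x hxT hxV
    obtain ⟨q, ⟨hqs, hqU⟩, hq⟩ := hxT
    have hq' : F q = (x, (0 : Fin n → ℝ)) := by rw [← hΦcoe]; exact hq
    have hq1 : q.1 = x := congrArg Prod.fst hq'
    have hq2 : f q = 0 := congrArg Prod.snd hq'
    have hqzero : q ∈ {p ∈ U | f p = 0} := ⟨hqU, hq2⟩
    rw [hgraph] at hqzero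
    obtain ⟨x', hx'V, hx'⟩ := hqzero
    have hx'x : x' = x := by rw [← hq1, ← hx']
    have hφ : φ x = q.2 := by rw [← hx'x, ← hx']
    have hΦsymm : Φ.symm (x, (0 : Fin n → ℝ)) = q := by rw [← hq]; exact Φ.left_inv hqs
    rw [hΦsymm, hφ]
  have hψ : AnalyticAt ℝ (fun x => (Φ.symm (x, (0 : Fin n → ℝ))).2) x₀ := by
    have hg : AnalyticAt ℝ (fun x : Fin m → ℝ => ((x, (0 : Fin n → ℝ)) : _ × _)) x₀ :=
      (analyticAt_id).prod analyticAt_const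
    have h2 : AnalyticAt ℝ ((Φ.symm : _ → _) ∘ (fun x : Fin m → ℝ => ((x, (0 : Fin n → ℝ)) : _ × _))) x₀ :=
      AnalyticAt.comp (x := x₀) hsymm hg
    exact analyticAt_snd.comp h2
  exact hψ.congr heq
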